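/- Let A = A0 + A1ε ∈ DQ^{p×q} and B = B0 + B1ε ∈ DQ^{p×r} be dual quaternion matrices. Then the dual quaternion matrix equation AX = B has a solution X ∈ DQ^{q×r} if and only if r[A0 B0] = r(A0) and r[A0 B1 A1; 0 B0 A0] = r[A0 A1; 0 A0], where the displayed matrices are block matrices with the indicated quaternion blocks and zero blocks of compatible sizes. -/

import Mathlib

open Matrix

/-- Quaternion matrices of size `p × q`. -/
abbrev QM (p q : ℕ) := Matrix (Fin p) (Fin q) (Quaternion ℝ)

/-- `Ad` is a Moore–Penrose inverse of the quaternion matrix `A`. -/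
def IsMP {p q : ℕ} (A : QM p q) (Ad : QM q p) : Prop :=
  A * Ad * A = A ∧ Ad * A * Ad = Ad ∧ (A * Ad)ᴴ = A * Ad ∧ (Ad * A)ᴴ = Ad * A

/-- The dual quaternion matrix `A0 + A1 ε`, realized as a matrix over the
dual numbers (dual quaternions) `DualNumber (Quaternion ℝ)`. -/
noncomputable def dm {p q : ℕ} (A0 A1 : QM p q) :
    Matrix (Fin p) (Fin q) (DualNumber (Quaternion ℝ)) :=
  A0.map TrivSqZeroExt.inl + A1.map TrivSqZeroExt.inr

/-- The rank of a quaternion matrix: the dimension (over `ℍ`) of the left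
`ℍ`-submodule spanned by its rows. -/
noncomputable def qrank {m n : Type*} (A : Matrix m n (Quaternion ℝ)) : ℕ :=
  Module.finrank (Quaternion ℝ)
    (Submodule.span (Quaternion ℝ) (Set.range (fun i : m => fun j : n => A i j)))

local notation "ℍ" => Quaternion ℝ

/-- Rank is invariant under column reindexing. -/
lemma qrank_submatrix {m n n' : Type*} (A : Matrix m n ℍ) (e : n' ≃ n) :
    qrank (A.submatrix id e) = qrank A := by
  unfold qrank
  have h : (Set.range fun i : m => fun j => A.submatrix id e i j)
      = ((LinearEquiv.funCongrLeft ℍ ℍ e : (n → ℍ) ≃ₗ[ℍ] (n' → ℍ)) :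
          (n → ℍ) →ₗ[ℍ] (n' → ℍ)) '' (Set.range fun i : m => fun j => A i j) := by
    rw [← Set.range_comp]
    rfl
  rw [h, ← Submodule.map_span, LinearEquiv.finrank_map_eq]

/-- Solvability of `A X = B` over the quaternions in terms of ranks. -/
lemma solvable_iff {m n n' : Type*} [Fintype m] [Fintype n] [DecidableEq n]
    (A : Matrix m n ℍ) (B : Matrix m n' ℍ) :
    (∃ X : Matrix n n' ℍ, A * X = B) ↔ qrank (fromCols A B) = qrank A := by
  classical
  set S := Submodule.span ℍ (Set.range fun i : m => fun j => A i j) with hS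
  set T := Submodule.span ℍ (Set.range fun i : m => fun j => fromCols A B i j) with hT
  have hqS : qrank A = Module.finrank ℍ S := rfl
  have hqT : qrank (fromCols A B) = Module.finrank ℍ T := rfl
  have hπ : Submodule.map (LinearMap.funLeft ℍ ℍ (Sum.inl : n → n ⊕ n')) T = S := by
    rw [hS, hT, Submodule.map_span, ← Set.range_comp]
    rfl
  haveI : FiniteDimensional ℍ T := FiniteDimensional.span_of_finite ℍ (Set.finite_range _)
  haveI : FiniteDimensional ℍ S := FiniteDimensional.span_of_finite ℍ (Set.finite_range _)
  constructor
  · rintro ⟨X, hX⟩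
    rw [hqS, hqT]
    refine le_antisymm ?_ ?_
    · let φ : (n → ℍ) →ₗ[ℍ] ((n ⊕ n') → ℍ) :=
        { toFun := fun v => Sum.elim v (fun j => ∑ k, v k * X k j)
          map_add' := by
            intro u v
            funext x
            cases x with
            | inl j => rfl
            | inr j => simp [add_mul, Finset.sum_add_distrib]
          map_smul' := by
            intro c v
            funext x
            cases x with
            | inl j => rfl
            | inr j =>
              simp only [RingHom.id_apply, Pi.smul_apply, smul_eq_mul, Sum.elim_inr,
                Finset.mul_sum, mul_assoc] }
      have hφ : Submodule.map φ S = T := by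
        rw [hS, hT, Submodule.map_span, ← Set.range_comp]
        have hco : (⇑φ ∘ fun i j => A i j) = (fun i j => fromCols A B i j) := by
          funext i x
          cases x with
          | inl j => rfl
          | inr j =>
            show ∑ k, A i k * X k j = fromCols A B i (Sum.inr j)
            rw [← mul_apply, hX]
            rfl
        rw [hco]
      rw [← hφ]
      exact Submodule.finrank_map_le φ S
    · rw [← hπ]
      exact Submodule.finrank_map_le _ T
  · intro hrank
    rw [hqS, hqT] at hrank
    have hle : ∀ x ∈ T, (LinearMap.funLeft ℍ ℍ (Sum.inl : n → n ⊕ n')) x ∈ S :=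
      fun x hx => hπ ▸ Submodule.mem_map_of_mem hx
    let f : T →ₗ[ℍ] S := (LinearMap.funLeft ℍ ℍ (Sum.inl : n → n ⊕ n')).restrict hle
    have hsurj : Function.Surjective f := by
      rintro ⟨s, hs⟩
      rw [← hπ] at hs
      obtain ⟨t, ht, rfl⟩ := hs
      exact ⟨⟨t, ht⟩, rfl⟩
    have hinj : Function.Injective f := by
      rw [← LinearMap.ker_eq_bot, ← Submodule.finrank_eq_zero]
      have h2 := LinearMap.finrank_range_add_finrank_ker f
      rw [LinearMap.range_eq_top.mpr hsurj, finrank_top] at h2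
      omega
    let e : T ≃ₗ[ℍ] S := LinearEquiv.ofBijective f ⟨hinj, hsurj⟩
    obtain ⟨ψ, hψ⟩ := ((LinearMap.funLeft ℍ ℍ (Sum.inr : n' → n ⊕ n')).comp
        (T.subtype.comp e.symm.toLinearMap)).exists_extend
    have hrow : ∀ i : m, ψ (fun j => A i j) = fun j => B i j := by
      intro i
      have hmemT : (fun j => fromCols A B i j) ∈ T := Submodule.subset_span ⟨i, rfl⟩
      have hmemS : (fun j => A i j) ∈ S := Submodule.subset_span ⟨i, rfl⟩
      have hft : f ⟨_, hmemT⟩ = ⟨fun j => A i j, hmemS⟩ := by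
        apply Subtype.ext
        rfl
      have hsymm : e.symm ⟨fun j => A i j, hmemS⟩ = ⟨_, hmemT⟩ := by
        apply e.injective
        rw [e.apply_symm_apply]
        exact hft.symm
      have h3 := LinearMap.congr_fun hψ ⟨fun j => A i j, hmemS⟩
      simp only [LinearMap.comp_apply, Submodule.subtype_apply, LinearEquiv.coe_coe] at h3
      rw [hsymm] at h3
      exact h3
    refine ⟨Matrix.of fun k j => ψ (fun j' => if k = j' then 1 else 0) j, Matrix.ext fun i j => ?_⟩
    rw [mul_apply]
    have hv : (fun j' => A i j') = ∑ k : n, A i k • (fun j'' => if k = j'' then (1:ℍ) else 0) :=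
      pi_eq_sum_univ (fun j' => A i j')
    have : ψ (fun j' => A i j') j = ∑ k, A i k * ψ (fun j' => if k = j' then 1 else 0) j := by
      rw [hv, map_sum]
      simp [Finset.sum_apply]
    show ∑ k, A i k * ψ (fun j' => if k = j' then 1 else 0) j = B i j
    rw [← this, hrow i]

lemma dm_mul {p q r : ℕ} (A0 A1 : QM p q) (X0 X1 : QM q r) :
    dm A0 A1 * dm X0 X1 = dm (A0 * X0) (A0 * X1 + A1 * X0) := by
  refine Matrix.ext fun i j => ?_
  apply TrivSqZeroExt.ext
  · simp [dm, mul_apply, TrivSqZeroExt.fst_sum]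
  · simp [dm, mul_apply, TrivSqZeroExt.snd_sum, TrivSqZeroExt.snd_mul,
      Finset.sum_add_distrib, MulOpposite.smul_eq_mul_unop, mul_comm]

lemma dm_inj {p q : ℕ} {A0 A1 B0 B1 : QM p q} (h : dm A0 A1 = dm B0 B1) :
    A0 = B0 ∧ A1 = B1 := by
  constructor <;> refine Matrix.ext fun i j => ?_
  · have := congrArg TrivSqZeroExt.fst (Matrix.ext_iff.mpr h i j)
    simpa [dm] using this
  · have := congrArg TrivSqZeroExt.snd (Matrix.ext_iff.mpr h i j)
    simpa [dm] using this

lemma dm_fst_snd {p q : ℕ} (X : Matrix (Fin p) (Fin q) (DualNumber ℍ)) :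
    dm (X.map TrivSqZeroExt.fst) (X.map TrivSqZeroExt.snd) = X := by
  refine Matrix.ext fun i j => ?_
  simp only [dm, Matrix.add_apply, Matrix.map_apply]
  exact TrivSqZeroExt.inl_fst_add_inr_snd_eq _

lemma perm_rank {p q r : ℕ} (A0 A1 : QM p q) (B0 B1 : QM p r) :
    qrank (fromCols (fromBlocks A0 A1 0 A0) (fromRows B1 B0)) =
      qrank (fromBlocks A0 (fromCols B1 A1) 0 (fromCols B0 A0)) := by
  let e : (Fin q ⊕ (Fin r ⊕ Fin q)) ≃ ((Fin q ⊕ Fin q) ⊕ Fin r) :=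
    { toFun := fun x => x.elim (fun j => Sum.inl (Sum.inl j))
        (fun y => y.elim Sum.inr (fun j => Sum.inl (Sum.inr j)))
      invFun := fun x => x.elim (fun y => y.elim Sum.inl (fun j => Sum.inr (Sum.inr j)))
        (fun j => Sum.inr (Sum.inl j))
      left_inv := by rintro (j | j | j) <;> rfl
      right_inv := by rintro ((j | j) | j) <;> rfl }
  have hm : fromBlocks A0 (fromCols B1 A1) 0 (fromCols B0 A0)
      = (fromCols (fromBlocks A0 A1 0 A0) (fromRows B1 B0)).submatrix id e := by
    refine Matrix.ext fun i j => ?_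
    rcases i with i | i <;> rcases j with j | j | j <;> rfl
  rw [hm, qrank_submatrix]

/-- solvability of the dual quaternion matrix equation `A X = B`
in terms of rank equalities. -/
theorem stmt8 {p q r : ℕ}
    (A0 A1 : QM p q) (B0 B1 : QM p r) :
    (∃ X : Matrix (Fin q) (Fin r) (DualNumber (Quaternion ℝ)),
        dm A0 A1 * X = dm B0 B1) ↔
      (qrank (fromCols A0 B0) = qrank A0 ∧
       qrank (fromBlocks A0 (fromCols B1 A1) 0 (fromCols B0 A0)) =
         qrank (fromBlocks A0 A1 0 A0)) := by
  classical
  have hquat : (∃ X : Matrix (Fin q) (Fin r) (DualNumber (Quaternion ℝ)),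
      dm A0 A1 * X = dm B0 B1) ↔
      ∃ X0 X1 : QM q r, A0 * X0 = B0 ∧ A0 * X1 + A1 * X0 = B1 := by
    constructor
    · rintro ⟨X, hX⟩
      rw [← dm_fst_snd X, dm_mul] at hX
      obtain ⟨h0, h1⟩ := dm_inj hX
      exact ⟨_, _, h0, h1⟩
    · rintro ⟨X0, X1, h0, h1⟩
      exact ⟨dm X0 X1, by rw [dm_mul, h0, h1]⟩
  have hblock : (∃ X0 X1 : QM q r, A0 * X0 = B0 ∧ A0 * X1 + A1 * X0 = B1) ↔
      ∃ Y : Matrix (Fin q ⊕ Fin q) (Fin r) ℍ,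
        fromBlocks A0 A1 0 A0 * Y = fromRows B1 B0 := by
    constructor
    · rintro ⟨X0, X1, h0, h1⟩
      refine ⟨fromRows X1 X0, ?_⟩
      rw [fromBlocks_mul_fromRows]
      simp [h0, h1]
    · rintro ⟨Y, hY⟩
      rw [← fromRows_toRows Y, fromBlocks_mul_fromRows] at hY
      rw [fromRows_inj.eq_iff] at hY
      obtain ⟨h1, h0⟩ := hY
      refine ⟨Y.toRows₂, Y.toRows₁, ?_, h1⟩
      simpa using h0
  constructor
  · intro hex
    obtain ⟨X0, X1, h0, h1⟩ := hquat.mp hex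
    refine ⟨(solvable_iff A0 B0).mp ⟨X0, h0⟩, ?_⟩
    have h2 := (solvable_iff (fromBlocks A0 A1 0 A0) (fromRows B1 B0)).mp
      (hblock.mp ⟨X0, X1, h0, h1⟩)
    rwa [perm_rank] at h2
  · rintro ⟨-, h2⟩
    rw [← perm_rank] at h2
    exact hquat.mpr (hblock.mpr ((solvable_iff _ _).mpr h2))
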